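/- For all sufficiently large k, there exist vectors v₁,…,v_{3k} ∈ {0,1}^{4k} such that Span{v₁,…,v_{3k}} is a linear code of relative distance at least 1/30 and Span{v_{k+1},…,v_{3k}} is a linear code of relative dual distance at least 1/10. In fact, uniformly random vectors satisfy both conditions with probability 1−o(1). -/

import Mathlib

open scoped Classical

open Finset

/-! ### Counting helpers -/

private lemma zmod2_sum (z : ℝ) : (∑ a : ZMod 2, if a ≠ 0 then z else 1) = 1 + z := by
  have h : (Finset.univ : Finset (ZMod 2)) = {0, 1} := by decide
  rw [h, Finset.sum_insert (by decide), Finset.sum_singleton]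
  norm_num

private lemma sum_pow_hammingNorm (n : ℕ) (z : ℝ) :
    ∑ x : Fin n → ZMod 2, z ^ hammingNorm x = (1 + z) ^ n := by
  have h1 : ∀ x : Fin n → ZMod 2, (z : ℝ) ^ hammingNorm x
      = ∏ j, (if x j ≠ 0 then z else 1) := by
    intro x
    rw [Finset.prod_ite, Finset.prod_const, Finset.prod_const_one, mul_one]
    rfl
  simp_rw [h1]
  rw [← Fintype.prod_sum (fun (_ : Fin n) (a : ZMod 2) => if a ≠ 0 then z else 1)]
  simp_rw [zmod2_sum, Finset.prod_const, Finset.card_univ, Fintype.card_fin]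

private lemma ball_card_le (n t : ℕ) (a : ℝ) (ha : 1 ≤ a) :
    (((univ : Finset (Fin n → ZMod 2)).filter (fun x => hammingNorm x ≤ t)).card : ℝ)
      ≤ a ^ t * (1 + 1/a) ^ n := by
  have ha0 : 0 < a := lt_of_lt_of_le one_pos ha
  have key : ∀ x : Fin n → ZMod 2, hammingNorm x ≤ t →
      (1 : ℝ) ≤ a ^ t * (1/a) ^ hammingNorm x := by
    intro x hx
    have h1 : (1/a) ^ t ≤ (1/a) ^ hammingNorm x :=
      pow_le_pow_of_le_one (by positivity) (by rw [div_le_one ha0]; exact ha) hx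
    calc (1:ℝ) = a ^ t * (1/a) ^ t := by
          rw [one_div, inv_pow, mul_inv_cancel₀ (by positivity)]
      _ ≤ a ^ t * (1/a) ^ hammingNorm x := mul_le_mul_of_nonneg_left h1 (by positivity)
  calc (((univ : Finset (Fin n → ZMod 2)).filter (fun x => hammingNorm x ≤ t)).card : ℝ)
      = ∑ _x ∈ (univ : Finset (Fin n → ZMod 2)).filter (fun x => hammingNorm x ≤ t), (1:ℝ) := by
        simp
    _ ≤ ∑ x ∈ (univ : Finset (Fin n → ZMod 2)).filter (fun x => hammingNorm x ≤ t),
          a ^ t * (1/a) ^ hammingNorm x := by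
        apply Finset.sum_le_sum
        intro x hx
        exact key x (Finset.mem_filter.mp hx).2
    _ ≤ ∑ x : Fin n → ZMod 2, a ^ t * (1/a) ^ hammingNorm x := by
        apply Finset.sum_le_sum_of_subset_of_nonneg (Finset.filter_subset _ _)
        intro x _ _; positivity
    _ = a ^ t * (1 + 1/a) ^ n := by
        rw [← Finset.mul_sum, sum_pow_hammingNorm]

private lemma ball_ncard_le (n t : ℕ) (a : ℝ) (ha : 1 ≤ a) :
    (({x : Fin n → ZMod 2 | hammingNorm x ≤ t}).ncard : ℝ) ≤ a ^ t * (1 + 1/a) ^ n := by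
  rw [Set.ncard_eq_toFinset_card', Set.toFinset_setOf]
  exact ball_card_le n t a ha

/-- Fiber of a surjective hom times card of codomain equals card of domain. -/
private lemma fiber_ncard_mul {G H : Type*} [AddCommGroup G] [AddCommGroup H]
    [Fintype G] [Fintype H] (φ : G →+ H) (hs : Function.Surjective φ) (a : H) :
    {x : G | φ x = a}.ncard * Nat.card H = Nat.card G := by
  obtain ⟨s, hsec⟩ := hs.hasRightInverse
  have e : {x : G // φ x = a} × H ≃ G := {
    toFun := fun p => p.1.1 + s p.2 - s a
    invFun := fun x => (⟨x - s (φ x) + s a, by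
      simp only [map_add, map_sub, hsec (φ x), hsec a]; abel⟩, φ x)
    left_inv := by
      rintro ⟨⟨z, hz⟩, b⟩
      have hφ : φ (z + s b - s a) = b := by
        simp only [map_add, map_sub, hz, hsec b, hsec a]; abel
      simp only [hφ]
      refine Prod.ext ?_ rfl
      apply Subtype.ext
      simp only
      abel
    right_inv := by
      intro x
      simp only
      abel }
  have h1 : Nat.card ({x : G // φ x = a} × H) = Nat.card G := Nat.card_congr e
  rw [Nat.card_prod] at h1
  rw [← h1]
  congr 1

private lemma ncard_exists_le {Ω ι : Type*} [Finite Ω] (S : Finset ι) (p : ι → Ω → Prop) :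
    ({v : Ω | ∃ u ∈ S, p u v}).ncard ≤ ∑ u ∈ S, ({v : Ω | p u v}).ncard := by
  classical
  induction S using Finset.induction_on with
  | empty => simp
  | @insert a S ha ih =>
    have hset : {v : Ω | ∃ u ∈ insert a S, p u v}
        = {v : Ω | p a v} ∪ {v : Ω | ∃ u ∈ S, p u v} := by
      ext v
      constructor
      · rintro ⟨u, hu, h⟩
        rcases Finset.mem_insert.mp hu with rfl | hu
        · exact Or.inl h
        · exact Or.inr ⟨u, hu, h⟩
      · rintro (h | ⟨u, hu, h⟩)
        · exact ⟨a, Finset.mem_insert_self _ _, h⟩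
        · exact ⟨u, Finset.mem_insert_of_mem hu, h⟩
    rw [hset, Finset.sum_insert ha]
    exact le_trans (Set.ncard_union_le _ _) (Nat.add_le_add_left ih _)

private lemma bad_count {Ω H ι : Type*} [AddCommGroup Ω] [AddCommGroup H]
    [Fintype Ω] [Fintype H] (Φ : ι → Ω →+ H) (S : Finset ι)
    (hsurj : ∀ u ∈ S, Function.Surjective (Φ u)) (T : Set H) :
    ({v : Ω | ∃ u ∈ S, Φ u v ∈ T}).ncard * Nat.card H
      ≤ S.card * T.ncard * Nat.card Ω := by
  have hper : ∀ u ∈ S, ({v : Ω | Φ u v ∈ T}).ncard * Nat.card H ≤ T.ncard * Nat.card Ω := by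
    intro u hu
    have h1 : {v : Ω | Φ u v ∈ T} = {v : Ω | ∃ b ∈ T.toFinite.toFinset, Φ u v = b} := by
      ext v
      simp only [Set.mem_setOf_eq, Set.Finite.mem_toFinset, exists_eq_right']
    rw [h1]
    calc ({v : Ω | ∃ b ∈ T.toFinite.toFinset, Φ u v = b}).ncard * Nat.card H
        ≤ (∑ b ∈ T.toFinite.toFinset, ({v : Ω | Φ u v = b}).ncard) * Nat.card H :=
          Nat.mul_le_mul_right _ (ncard_exists_le _ _)
      _ = ∑ b ∈ T.toFinite.toFinset, ({v : Ω | Φ u v = b}).ncard * Nat.card H :=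
          Finset.sum_mul _ _ _
      _ = ∑ _b ∈ T.toFinite.toFinset, Nat.card Ω :=
          Finset.sum_congr rfl (fun b _ => fiber_ncard_mul (Φ u) (hsurj u hu) b)
      _ = T.toFinite.toFinset.card * Nat.card Ω := by
          rw [Finset.sum_const, smul_eq_mul]
      _ = T.ncard * Nat.card Ω := by
          rw [Set.ncard_eq_toFinset_card _ T.toFinite]
  calc ({v : Ω | ∃ u ∈ S, Φ u v ∈ T}).ncard * Nat.card H
      ≤ (∑ u ∈ S, ({v : Ω | Φ u v ∈ T}).ncard) * Nat.card H :=
        Nat.mul_le_mul_right _ (ncard_exists_le _ _)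
    _ = ∑ u ∈ S, ({v : Ω | Φ u v ∈ T}).ncard * Nat.card H := Finset.sum_mul _ _ _
    _ ≤ ∑ _u ∈ S, T.ncard * Nat.card Ω := Finset.sum_le_sum hper
    _ = S.card * (T.ncard * Nat.card Ω) := by rw [Finset.sum_const, smul_eq_mul]
    _ = S.card * T.ncard * Nat.card Ω := by ring

/-! ### The two linear maps -/

private def phiMap (k : ℕ) (c : Fin k ⊕ Fin (2*k) → ZMod 2) :
    ((Fin k ⊕ Fin (2*k)) → Fin (4*k) → ZMod 2) →+ (Fin (4*k) → ZMod 2) :=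
  AddMonoidHom.mk' (fun v => ∑ i, c i • v i) (by
    intro v w
    simp only [Pi.add_apply, smul_add]
    exact Finset.sum_add_distrib)

private lemma phiMap_apply (k : ℕ) (c : Fin k ⊕ Fin (2*k) → ZMod 2)
    (v : (Fin k ⊕ Fin (2*k)) → Fin (4*k) → ZMod 2) :
    phiMap k c v = ∑ i, c i • v i := rfl

private lemma phiMap_zero (k : ℕ) (v : (Fin k ⊕ Fin (2*k)) → Fin (4*k) → ZMod 2) :
    phiMap k 0 v = 0 := by
  rw [phiMap_apply]; simp

private lemma zmod2_ne_zero {a : ZMod 2} (h : a ≠ 0) : a = 1 := by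
  revert h; revert a; decide

private lemma phiMap_surj (k : ℕ) (c : Fin k ⊕ Fin (2*k) → ZMod 2) (hc : c ≠ 0) :
    Function.Surjective (phiMap k c) := by
  obtain ⟨i0, hi0⟩ : ∃ i, c i ≠ 0 := by
    by_contra h; push_neg at h; exact hc (funext h)
  intro x
  refine ⟨fun i => if i = i0 then x else 0, ?_⟩
  rw [phiMap_apply, Finset.sum_eq_single i0]
  · simp [zmod2_ne_zero hi0]
  · intro b _ hb; simp [hb]
  · intro h; exact absurd (Finset.mem_univ i0) h

private def psiMap (k : ℕ) (u : Fin (4*k) → ZMod 2) :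
    ((Fin k ⊕ Fin (2*k)) → Fin (4*k) → ZMod 2) →+ (Fin (2*k) → ZMod 2) :=
  AddMonoidHom.mk' (fun v => fun i => ∑ j, u j * v (Sum.inr i) j) (by
    intro v w; funext i
    simp only [Pi.add_apply, mul_add]
    exact Finset.sum_add_distrib)

private lemma psiMap_apply (k : ℕ) (u : Fin (4*k) → ZMod 2)
    (v : (Fin k ⊕ Fin (2*k)) → Fin (4*k) → ZMod 2) (i : Fin (2*k)) :
    psiMap k u v i = ∑ j, u j * v (Sum.inr i) j := rfl

private lemma psiMap_surj (k : ℕ) (u : Fin (4*k) → ZMod 2) (hu : u ≠ 0) :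
    Function.Surjective (psiMap k u) := by
  obtain ⟨j0, hj0⟩ : ∃ j, u j ≠ 0 := by
    by_contra h; push_neg at h; exact hu (funext h)
  intro g
  refine ⟨fun s => Sum.elim (fun _ _ => 0) (fun i j => if j = j0 then g i else 0) s, ?_⟩
  funext i
  rw [psiMap_apply]
  simp only [Sum.elim_inr]
  rw [Finset.sum_eq_single j0]
  · simp [zmod2_ne_zero hj0]
  · intro b _ hb; simp [hb]
  · intro h; exact absurd (Finset.mem_univ j0) h

private lemma cardW (k : ℕ) : Nat.card (Fin (4*k) → ZMod 2) = 2^(4*k) := by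
  rw [Nat.card_eq_fintype_card]; simp [ZMod.card]

private lemma cardW2 (k : ℕ) : Nat.card (Fin (2*k) → ZMod 2) = 2^(2*k) := by
  rw [Nat.card_eq_fintype_card]; simp [ZMod.card]

private lemma cardC (k : ℕ) : Fintype.card (Fin k ⊕ Fin (2*k) → ZMod 2) = 2^(3*k) := by
  simp [ZMod.card]; omega

/-! ### Analytic constants -/

private noncomputable def rA : ℝ := (2:ℝ)^((8:ℝ)/15) * (17/16)^4 / 2
private noncomputable def rB : ℝ := (2:ℝ)^((6:ℝ)/5) * (9/8)^4 / 4

private lemma rA_nonneg : 0 ≤ rA := by unfold rA; positivity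

private lemma rB_nonneg : 0 ≤ rB := by unfold rB; positivity

private lemma rpow_lt_of_pow (x c : ℝ) (hx : 0 ≤ x) (hc : 0 < c) (m : ℕ)
    (h : x ^ m < c ^ m) : x < c :=
  lt_of_pow_lt_pow_left₀ m (le_of_lt hc) h

private lemma two_rpow_pow (q : ℝ) (m : ℕ) : ((2:ℝ) ^ (q : ℝ)) ^ m = (2:ℝ) ^ (q * m) := by
  rw [← Real.rpow_natCast ((2:ℝ) ^ (q:ℝ)) m, ← Real.rpow_mul (by norm_num)]

private lemma rA_lt_one : rA < 1 := by
  unfold rA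
  rw [div_lt_one (by norm_num)]
  have h : (2:ℝ) ^ ((8:ℝ)/15) < 2 / (17/16)^4 := by
    apply rpow_lt_of_pow _ _ (by positivity) (by positivity) 15
    rw [two_rpow_pow]
    norm_num
  calc (2:ℝ)^((8:ℝ)/15) * (17/16)^4 < (2 / (17/16)^4) * (17/16)^4 :=
        mul_lt_mul_of_pos_right h (by positivity)
    _ = 2 := by norm_num

private lemma rB_lt_one : rB < 1 := by
  unfold rB
  rw [div_lt_one (by norm_num)]
  have h : (2:ℝ) ^ ((6:ℝ)/5) < 4 / (9/8)^4 := by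
    apply rpow_lt_of_pow _ _ (by positivity) (by positivity) 5
    rw [two_rpow_pow]
    norm_num
  calc (2:ℝ)^((6:ℝ)/5) * (9/8)^4 < (4 / (9/8)^4) * (9/8)^4 :=
        mul_lt_mul_of_pos_right h (by positivity)
    _ = 4 := by norm_num

private lemma cast_nat_div_le (a b : ℕ) : ((a / b : ℕ) : ℝ) ≤ (a : ℝ) / (b : ℝ) :=
  Nat.cast_div_le

private lemma stepA (k : ℕ) :
    (2:ℝ)^(3*k) * ((16:ℝ)^(4*k/30) * ((17:ℝ)/16)^(4*k)) / 2^(4*k) ≤ rA ^ k := by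
  have hrA : rA ^ k = (2:ℝ)^((8:ℝ)/15 * k) * ((17:ℝ)/16)^(4*k) / 2^k := by
    unfold rA
    rw [div_pow, mul_pow, two_rpow_pow, ← pow_mul]
  have h1 : ((16:ℝ))^(4*k/30) ≤ (2:ℝ) ^ ((8:ℝ)/15 * k) := by
    have h2 : (16:ℝ)^(4*k/30) = (2:ℝ) ^ (((4*(4*k/30) : ℕ)) : ℝ) := by
      rw [Real.rpow_natCast, show (16:ℝ) = 2^(4:ℕ) by norm_num, ← pow_mul]
    rw [h2]
    apply Real.rpow_le_rpow_of_exponent_le one_le_two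
    have h3 := cast_nat_div_le (4*k) 30
    push_cast
    push_cast at h3
    linarith
  have h4 : (2:ℝ)^(4*k) = 2^(3*k) * 2^k := by
    rw [← pow_add]; congr 1; omega
  rw [hrA, h4, mul_div_mul_left _ _ (by positivity : (2:ℝ)^(3*k) ≠ 0)]
  gcongr

private lemma stepB (k : ℕ) :
    ((8:ℝ))^(4*k/10) * ((9:ℝ)/8)^(4*k) / 2^(2*k) ≤ rB ^ k := by
  have hrB : rB ^ k = (2:ℝ)^((6:ℝ)/5 * k) * ((9:ℝ)/8)^(4*k) / 2^(2*k) := by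
    unfold rB
    rw [div_pow, mul_pow, two_rpow_pow, ← pow_mul]
    congr 1
    rw [show (4:ℝ) = 2^(2:ℕ) by norm_num, ← pow_mul]
  have h1 : ((8:ℝ))^(4*k/10) ≤ (2:ℝ) ^ ((6:ℝ)/5 * k) := by
    have h2 : (8:ℝ)^(4*k/10) = (2:ℝ) ^ (((3*(4*k/10) : ℕ)) : ℝ) := by
      rw [Real.rpow_natCast, show (8:ℝ) = 2^(3:ℕ) by norm_num, ← pow_mul]
    rw [h2]
    apply Real.rpow_le_rpow_of_exponent_le one_le_two
    have h3 := cast_nat_div_le (4*k) 10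
    push_cast
    push_cast at h3
    linarith
  rw [hrB]
  gcongr

/-! ### The good set and the main per-`k` inequality -/

private def GoodSet (k : ℕ) : Set (Fin k ⊕ Fin (2 * k) → Fin (4 * k) → ZMod 2) :=
  {v | (∀ x ∈ Submodule.span (ZMod 2) (Set.range v), x ≠ 0 →
        (1 : ℝ) / 30 * (4 * k) ≤ (hammingNorm x : ℝ)) ∧
      (∀ u : Fin (4 * k) → ZMod 2,
        (∀ x ∈ Submodule.span (ZMod 2) (Set.range (v ∘ Sum.inr)), ∑ j, u j * x j = 0) →
        u ≠ 0 → (1 : ℝ) / 10 * (4 * k) ≤ (hammingNorm u : ℝ))}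

private lemma main_lower (k : ℕ) :
    (1 : ℝ) - rA^k - rB^k ≤ ((GoodSet k).ncard : ℝ)
      / (Fintype.card (Fin k ⊕ Fin (2 * k) → Fin (4 * k) → ZMod 2) : ℝ) := by
  set Sc : Finset (Fin k ⊕ Fin (2*k) → ZMod 2) :=
    univ.filter (fun c => c ≠ 0) with hSc
  set TA : Set (Fin (4*k) → ZMod 2) :=
    {x | x ≠ 0 ∧ 30 * hammingNorm x < 4*k} with hTA
  set SBs : Set (Fin (4*k) → ZMod 2) :=
    {u | u ≠ 0 ∧ 10 * hammingNorm u < 4*k} with hSBs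
  set BA : Set (Fin k ⊕ Fin (2 * k) → Fin (4 * k) → ZMod 2) :=
    {v | ∃ c ∈ Sc, phiMap k c v ∈ TA} with hBA
  set BB : Set (Fin k ⊕ Fin (2 * k) → Fin (4 * k) → ZMod 2) :=
    {v | ∃ u ∈ SBs.toFinite.toFinset,
      psiMap k u v ∈ ({0} : Set (Fin (2*k) → ZMod 2))} with hBB
  have hN0 : (0:ℝ) < (Fintype.card (Fin k ⊕ Fin (2 * k) → Fin (4 * k) → ZMod 2) : ℝ) := by
    exact_mod_cast Fintype.card_pos
  -- covering
  have hcover : (Set.univ : Set (Fin k ⊕ Fin (2 * k) → Fin (4 * k) → ZMod 2))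
      ⊆ GoodSet k ∪ (BA ∪ BB) := by
    intro v _
    by_cases hv : v ∈ GoodSet k
    · exact Or.inl hv
    right
    rw [GoodSet, Set.mem_setOf_eq, not_and_or] at hv
    rcases hv with hv | hv
    · left
      push_neg at hv
      obtain ⟨x, hxspan, hxne, hxlt⟩ := hv
      obtain ⟨c, hc⟩ := (Submodule.mem_span_range_iff_exists_fun (ZMod 2)).mp hxspan
      have hcne : c ≠ 0 := by
        rintro rfl
        apply hxne
        rw [← hc]
        simp
      refine ⟨c, by simp [hSc, hcne], ?_⟩
      have hphi : phiMap k c v = x := by rw [phiMap_apply, hc]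
      rw [hTA, Set.mem_setOf_eq, hphi]
      refine ⟨hxne, ?_⟩
      have h30 : (30:ℝ) * (hammingNorm x : ℝ) < 4 * k := by
        push_cast at hxlt ⊢
        linarith
      exact_mod_cast h30
    · right
      push_neg at hv
      obtain ⟨u, hu1, hu2, hu3⟩ := hv
      refine ⟨u, ?_, ?_⟩
      · rw [Set.Finite.mem_toFinset, hSBs, Set.mem_setOf_eq]
        refine ⟨hu2, ?_⟩
        have : (10:ℝ) * (hammingNorm u : ℝ) < 4 * k := by
          have := hu3
          push_cast at this ⊢
          linarith
        exact_mod_cast this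
      · show psiMap k u v = 0
        funext i
        rw [psiMap_apply]
        exact hu1 ((v ∘ Sum.inr) i) (Submodule.subset_span ⟨i, rfl⟩)
  -- cardinality covering bound
  have hGle : Nat.card (Fin k ⊕ Fin (2 * k) → Fin (4 * k) → ZMod 2)
      ≤ (GoodSet k).ncard + (BA.ncard + BB.ncard) := by
    calc Nat.card (Fin k ⊕ Fin (2 * k) → Fin (4 * k) → ZMod 2)
        = (Set.univ : Set (Fin k ⊕ Fin (2 * k) → Fin (4 * k) → ZMod 2)).ncard :=
          (Set.ncard_univ _).symm
      _ ≤ (GoodSet k ∪ (BA ∪ BB)).ncard := Set.ncard_le_ncard hcover (Set.toFinite _)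
      _ ≤ (GoodSet k).ncard + (BA ∪ BB).ncard := Set.ncard_union_le _ _
      _ ≤ (GoodSet k).ncard + (BA.ncard + BB.ncard) :=
          Nat.add_le_add_left (Set.ncard_union_le _ _) _
  -- bound on BA
  have hBAr : (BA.ncard : ℝ)
      ≤ rA^k * (Fintype.card (Fin k ⊕ Fin (2 * k) → Fin (4 * k) → ZMod 2) : ℝ) := by
    have hb := bad_count (fun c => phiMap k c) Sc
      (fun c hc => phiMap_surj k c (by simpa [hSc] using hc)) TA
    rw [cardW, Nat.card_eq_fintype_card] at hb
    have hsc : Sc.card ≤ 2^(3*k) :=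
      le_trans (Finset.card_filter_le _ _) (by rw [Finset.card_univ, cardC])
    have hta : (TA.ncard : ℝ) ≤ 16^(4*k/30) * ((17:ℝ)/16)^(4*k) := by
      have hsub : TA ⊆ {x | hammingNorm x ≤ 4*k/30} := by
        rintro x ⟨-, h2⟩
        simp only [Set.mem_setOf_eq]
        rw [Nat.le_div_iff_mul_le (by norm_num : 0 < 30)]
        omega
      calc (TA.ncard : ℝ)
          ≤ (({x : Fin (4*k) → ZMod 2 | hammingNorm x ≤ 4*k/30}).ncard : ℝ) := by
            exact_mod_cast Set.ncard_le_ncard hsub (Set.toFinite _)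
        _ ≤ 16^(4*k/30) * (1 + 1/16)^(4*k) := ball_ncard_le _ _ 16 (by norm_num)
        _ = 16^(4*k/30) * ((17:ℝ)/16)^(4*k) := by norm_num
    have hbR : (BA.ncard : ℝ) * 2^(4*k) ≤ (Sc.card : ℝ) * (TA.ncard : ℝ)
        * (Fintype.card (Fin k ⊕ Fin (2 * k) → Fin (4 * k) → ZMod 2) : ℝ) := by
      exact_mod_cast hb
    have hscR : (Sc.card : ℝ) ≤ 2^(3*k) := by exact_mod_cast hsc
    have hmid : (BA.ncard:ℝ) ≤ ((2:ℝ)^(3*k) * ((16:ℝ)^(4*k/30) * ((17:ℝ)/16)^(4*k)) / 2^(4*k))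
        * (Fintype.card (Fin k ⊕ Fin (2 * k) → Fin (4 * k) → ZMod 2) : ℝ) := by
      rw [div_mul_eq_mul_div, le_div_iff₀ (by positivity : (0:ℝ) < 2^(4*k))]
      calc (BA.ncard:ℝ) * 2^(4*k) ≤ (Sc.card : ℝ) * (TA.ncard : ℝ)
            * (Fintype.card (Fin k ⊕ Fin (2 * k) → Fin (4 * k) → ZMod 2) : ℝ) := hbR
        _ ≤ (2:ℝ)^(3*k) * ((16:ℝ)^(4*k/30) * ((17:ℝ)/16)^(4*k))
            * (Fintype.card (Fin k ⊕ Fin (2 * k) → Fin (4 * k) → ZMod 2) : ℝ) := by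
            have hta0 : (0:ℝ) ≤ (TA.ncard : ℝ) := by positivity
            apply mul_le_mul_of_nonneg_right _ hN0.le
            exact mul_le_mul hscR hta (by positivity) (by positivity)
    exact le_trans hmid (mul_le_mul_of_nonneg_right (stepA k) hN0.le)
  -- bound on BB
  have hBBr : (BB.ncard : ℝ)
      ≤ rB^k * (Fintype.card (Fin k ⊕ Fin (2 * k) → Fin (4 * k) → ZMod 2) : ℝ) := by
    have hb := bad_count (fun u => psiMap k u) SBs.toFinite.toFinset
      (fun u hu => psiMap_surj k u (by
        rw [Set.Finite.mem_toFinset] at hu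
        exact hu.1)) ({0} : Set (Fin (2*k) → ZMod 2))
    rw [cardW2, Nat.card_eq_fintype_card, Set.ncard_singleton, mul_one,
      ← Set.ncard_eq_toFinset_card _ SBs.toFinite] at hb
    have hsb : (SBs.ncard : ℝ) ≤ 8^(4*k/10) * ((9:ℝ)/8)^(4*k) := by
      have hsub : SBs ⊆ {x | hammingNorm x ≤ 4*k/10} := by
        rintro x ⟨-, h2⟩
        simp only [Set.mem_setOf_eq]
        rw [Nat.le_div_iff_mul_le (by norm_num : 0 < 10)]
        omega
      calc (SBs.ncard : ℝ)
          ≤ (({x : Fin (4*k) → ZMod 2 | hammingNorm x ≤ 4*k/10}).ncard : ℝ) := by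
            exact_mod_cast Set.ncard_le_ncard hsub (Set.toFinite _)
        _ ≤ 8^(4*k/10) * (1 + 1/8)^(4*k) := ball_ncard_le _ _ 8 (by norm_num)
        _ = 8^(4*k/10) * ((9:ℝ)/8)^(4*k) := by norm_num
    have hbR : (BB.ncard : ℝ) * 2^(2*k) ≤ (SBs.ncard : ℝ)
        * (Fintype.card (Fin k ⊕ Fin (2 * k) → Fin (4 * k) → ZMod 2) : ℝ) := by
      exact_mod_cast hb
    have hmid : (BB.ncard:ℝ) ≤ ((8:ℝ)^(4*k/10) * ((9:ℝ)/8)^(4*k) / 2^(2*k))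
        * (Fintype.card (Fin k ⊕ Fin (2 * k) → Fin (4 * k) → ZMod 2) : ℝ) := by
      rw [div_mul_eq_mul_div, le_div_iff₀ (by positivity : (0:ℝ) < 2^(2*k))]
      calc (BB.ncard:ℝ) * 2^(2*k)
          ≤ (SBs.ncard : ℝ)
            * (Fintype.card (Fin k ⊕ Fin (2 * k) → Fin (4 * k) → ZMod 2) : ℝ) := hbR
        _ ≤ (8:ℝ)^(4*k/10) * ((9:ℝ)/8)^(4*k)
            * (Fintype.card (Fin k ⊕ Fin (2 * k) → Fin (4 * k) → ZMod 2) : ℝ) :=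
            mul_le_mul_of_nonneg_right hsb hN0.le
    exact le_trans hmid (mul_le_mul_of_nonneg_right (stepB k) hN0.le)
  -- conclude
  rw [le_div_iff₀ hN0]
  have hGleR : (Fintype.card (Fin k ⊕ Fin (2 * k) → Fin (4 * k) → ZMod 2) : ℝ)
      ≤ ((GoodSet k).ncard : ℝ) + ((BA.ncard : ℝ) + (BB.ncard : ℝ)) := by
    rw [← Nat.card_eq_fintype_card]
    exact_mod_cast hGle
  nlinarith [hBAr, hBBr, hGleR]

private lemma main_upper (k : ℕ) :
    ((GoodSet k).ncard : ℝ)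
      / (Fintype.card (Fin k ⊕ Fin (2 * k) → Fin (4 * k) → ZMod 2) : ℝ) ≤ 1 := by
  have hN0 : (0:ℝ) < (Fintype.card (Fin k ⊕ Fin (2 * k) → Fin (4 * k) → ZMod 2) : ℝ) := by
    exact_mod_cast Fintype.card_pos
  rw [div_le_one hN0]
  have : (GoodSet k).ncard ≤ Nat.card (Fin k ⊕ Fin (2 * k) → Fin (4 * k) → ZMod 2) := by
    rw [← Set.ncard_univ]
    exact Set.ncard_le_ncard (Set.subset_univ _) (Set.toFinite _)
  rw [← Nat.card_eq_fintype_card]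
  exact_mod_cast this

theorem stmt10 :
    (∃ K : ℕ, ∀ k ≥ K, ∃ v : Fin k ⊕ Fin (2 * k) → Fin (4 * k) → ZMod 2,
      (∀ x ∈ Submodule.span (ZMod 2) (Set.range v), x ≠ 0 →
        (1 : ℝ) / 30 * (4 * k) ≤ (hammingNorm x : ℝ)) ∧
      (∀ u : Fin (4 * k) → ZMod 2,
        (∀ x ∈ Submodule.span (ZMod 2) (Set.range (v ∘ Sum.inr)), ∑ j, u j * x j = 0) →
        u ≠ 0 → (1 : ℝ) / 10 * (4 * k) ≤ (hammingNorm u : ℝ))) ∧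
    Filter.Tendsto
      (fun k : ℕ =>
        (({v : Fin k ⊕ Fin (2 * k) → Fin (4 * k) → ZMod 2 |
            (∀ x ∈ Submodule.span (ZMod 2) (Set.range v), x ≠ 0 →
              (1 : ℝ) / 30 * (4 * k) ≤ (hammingNorm x : ℝ)) ∧
            (∀ u : Fin (4 * k) → ZMod 2,
              (∀ x ∈ Submodule.span (ZMod 2) (Set.range (v ∘ Sum.inr)),
                ∑ j, u j * x j = 0) →
              u ≠ 0 → (1 : ℝ) / 10 * (4 * k) ≤ (hammingNorm u : ℝ))}.ncard : ℝ)
          / (Fintype.card (Fin k ⊕ Fin (2 * k) → Fin (4 * k) → ZMod 2) : ℝ)))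
      Filter.atTop (nhds 1) := by
  have htend : Filter.Tendsto
      (fun k : ℕ => ((GoodSet k).ncard : ℝ)
        / (Fintype.card (Fin k ⊕ Fin (2 * k) → Fin (4 * k) → ZMod 2) : ℝ))
      Filter.atTop (nhds 1) := by
    have hlow : Filter.Tendsto (fun k : ℕ => (1:ℝ) - rA^k - rB^k) Filter.atTop
        (nhds 1) := by
      have h : Filter.Tendsto (fun k : ℕ => (1:ℝ) - rA^k - rB^k) Filter.atTop
          (nhds (1 - 0 - 0)) :=
        (tendsto_const_nhds.sub
          (tendsto_pow_atTop_nhds_zero_of_lt_one rA_nonneg rA_lt_one)).sub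
          (tendsto_pow_atTop_nhds_zero_of_lt_one rB_nonneg rB_lt_one)
      simpa using h
    exact tendsto_of_tendsto_of_tendsto_of_le_of_le hlow tendsto_const_nhds
      (fun k => main_lower k) (fun k => main_upper k)
  constructor
  · have hev : ∀ᶠ k : ℕ in Filter.atTop, (0:ℝ) < ((GoodSet k).ncard : ℝ)
        / (Fintype.card (Fin k ⊕ Fin (2 * k) → Fin (4 * k) → ZMod 2) : ℝ) :=
      htend.eventually (eventually_gt_nhds (by norm_num))
    obtain ⟨K, hK⟩ := Filter.eventually_atTop.mp hev
    refine ⟨K, fun k hk => ?_⟩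
    have h := hK k hk
    have hne : (GoodSet k).ncard ≠ 0 := by
      intro h0
      rw [h0] at h
      simp at h
    obtain ⟨v, hv⟩ := Set.nonempty_of_ncard_ne_zero hne
    exact ⟨v, hv.1, hv.2⟩
  · exact htend
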